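/- If F and G are both GCD-morphic sequences, their pointwise product need not be GCD-morphic; however, if F = ∏ G_{c_i,i} and G = ∏ G_{d_i,i} with both c and d satisfying (C1) and additionally gcd(c(n)·d(n), c(k)·d(k)) = 1 whenever k < n and gcd(n,k) ≠ k, then the pointwise product F·G is GCD-morphic. -/

import Mathlib

theorem product_gcd_morphic (c d : ℕ → ℕ)
    (hcpos : ∀ j, 1 ≤ j → 1 ≤ c j) (hdpos : ∀ j, 1 ≤ j → 1 ≤ d j)
    (hC1c : ∀ k n, 1 ≤ k → k < n → Nat.gcd n k ≠ k → Nat.gcd (c n) (c k) = 1)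
    (hC1d : ∀ k n, 1 ≤ k → k < n → Nat.gcd n k ≠ k → Nat.gcd (d n) (d k) = 1)
    (hmixed : ∀ k n, 1 ≤ k → k < n → Nat.gcd n k ≠ k →
      Nat.gcd (c n * d n) (c k * d k) = 1)
    (F G : ℕ → ℕ)
    (hF : ∀ n, F n = ∏ j ∈ n.divisors, c j)
    (hG : ∀ n, G n = ∏ j ∈ n.divisors, d j) :
    ∀ n m, 1 ≤ n → 1 ≤ m →
      Nat.gcd (F n * G n) (F m * G m) = F (Nat.gcd n m) * G (Nat.gcd n m) := by
  intro n m hn hm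
  set e : ℕ → ℕ := fun j => c j * d j with he
  have key : ∀ x : ℕ, F x * G x = ∏ j ∈ x.divisors, e j := by
    intro x
    rw [hF, hG, ← Finset.prod_mul_distrib]
  rw [key, key, key]
  set g := Nat.gcd n m with hg
  have hn0 : n ≠ 0 := Nat.one_le_iff_ne_zero.mp hn
  have hm0 : m ≠ 0 := Nat.one_le_iff_ne_zero.mp hm
  have hg0 : g ≠ 0 := Nat.one_le_iff_ne_zero.mp (Nat.gcd_pos_of_pos_left m hn)
  have hsubn : g.divisors ⊆ n.divisors := by
    intro j hj
    rw [Nat.mem_divisors] at hj ⊢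
    exact ⟨hj.1.trans (Nat.gcd_dvd_left n m), hn0⟩
  have hsubm : g.divisors ⊆ m.divisors := by
    intro j hj
    rw [Nat.mem_divisors] at hj ⊢
    exact ⟨hj.1.trans (Nat.gcd_dvd_right n m), hm0⟩
  rw [← Finset.prod_sdiff hsubn, ← Finset.prod_sdiff hsubm, Nat.gcd_mul_right]
  -- coprimality of the two sdiff products
  have hcop : ∀ j ∈ n.divisors \ g.divisors, ∀ k ∈ m.divisors \ g.divisors,
      Nat.Coprime (e j) (e k) := by
    intro j hj k hk
    rw [Finset.mem_sdiff, Nat.mem_divisors, Nat.mem_divisors] at hj hk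
    have hjn : j ∣ n := hj.1.1
    have hkm : k ∣ m := hk.1.1
    have hjpos : 1 ≤ j := Nat.pos_of_dvd_of_pos hjn hn
    have hkpos : 1 ≤ k := Nat.pos_of_dvd_of_pos hkm hm
    have hjng : ¬ j ∣ g := fun h => hj.2 ⟨h, hg0⟩
    have hkng : ¬ k ∣ g := fun h => hk.2 ⟨h, hg0⟩
    have hne : j ≠ k := by
      rintro rfl
      exact hjng (Nat.dvd_gcd hjn hkm)
    rcases hne.lt_or_gt with hlt | hlt
    · -- j < k
      have hndvd : Nat.gcd k j ≠ j := by
        intro h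
        have : j ∣ k := h ▸ Nat.gcd_dvd_left k j
        exact hjng (Nat.dvd_gcd hjn (this.trans hkm))
      have := hmixed j k hjpos hlt hndvd
      exact Nat.Coprime.symm this
    · -- k < j
      have hndvd : Nat.gcd j k ≠ k := by
        intro h
        have : k ∣ j := h ▸ Nat.gcd_dvd_left j k
        exact hkng (Nat.dvd_gcd (this.trans hjn) hkm)
      exact hmixed k j hkpos hlt hndvd
  have hAB : Nat.Coprime (∏ j ∈ n.divisors \ g.divisors, e j)
      (∏ k ∈ m.divisors \ g.divisors, e k) := by
    apply Nat.Coprime.prod_left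
    intro j hj
    apply Nat.Coprime.prod_right
    intro k hk
    exact hcop j hj k hk
  rw [hAB, one_mul]
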